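/- Almost surely, for every n ∈ ℤ, the limit lim_{N→∞} (1/(2N+1)) · Σ_{m=-N}^{N} w_m · w_{m+n} exists and equals η(n), where η(0) = 1, η(1) = η(−1) = −1/2, and η(n) = 0 for |n| ≥ 2. -/

import Mathlib

open MeasureTheory ProbabilityTheory Filter

set_option linter.unusedSectionVars false
set_option linter.unusedVariables false
set_option linter.unreachableTactic false
set_option linter.unusedTactic false
set_option maxHeartbeats 1000000

namespace DMSProof

open Finset
open scoped ENNReal NNReal Topology

variable {Ω : Type*} [MeasurableSpace Ω] {P : Measure Ω} [IsProbabilityMeasure P]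
  {ε : ℤ → Ω → ℝ}

lemma meas_eq (hdist : ∀ k, P {ω | ε k ω = 1} = 1/2 ∧ P {ω | ε k ω = -1} = 1/2)
    (k : ℤ) {u : ℝ} (hu : u = 1 ∨ u = -1) : P {ω | ε k ω = u} = 1/2 := by
  rcases hu with h | h <;> subst h
  · exact (hdist k).1
  · exact (hdist k).2

lemma null_k (hmeas : ∀ k, Measurable (ε k))
    (hdist : ∀ k, P {ω | ε k ω = 1} = 1/2 ∧ P {ω | ε k ω = -1} = 1/2)
    (k : ℤ) : P ({ω | ε k ω = 1 ∨ ε k ω = -1})ᶜ = 0 := by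
  have h1 : MeasurableSet {ω | ε k ω = 1} := hmeas k (measurableSet_singleton 1)
  have h2 : MeasurableSet {ω | ε k ω = -1} := hmeas k (measurableSet_singleton (-1))
  have hset : {ω | ε k ω = 1 ∨ ε k ω = -1}
      = {ω | ε k ω = 1} ∪ {ω | ε k ω = -1} := by ext ω; simp [Set.mem_union]
  have hd : Disjoint {ω : Ω | ε k ω = 1} {ω | ε k ω = -1} := by
    rw [Set.disjoint_left]
    intro ω ha hb
    simp only [Set.mem_setOf_eq] at ha hb
    rw [ha] at hb; norm_num at hb
  have hu : P ({ω | ε k ω = 1} ∪ {ω | ε k ω = -1}) = 1 := by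
    rw [measure_union hd h2, (hdist k).1, (hdist k).2, ENNReal.add_halves]
  rw [hset, measure_compl (h1.union h2) (measure_ne_top _ _), hu, measure_univ, tsub_self]

lemma good (hmeas : ∀ k, Measurable (ε k))
    (hdist : ∀ k, P {ω | ε k ω = 1} = 1/2 ∧ P {ω | ε k ω = -1} = 1/2) :
    ∀ᵐ ω ∂P, ∀ k : ℤ, ε k ω = 1 ∨ ε k ω = -1 := by
  rw [ae_all_iff]
  intro k
  have := null_k hmeas hdist k
  rw [ae_iff]
  rw [show {a | ¬(ε k a = 1 ∨ ε k a = -1)} = ({ω | ε k ω = 1 ∨ ε k ω = -1})ᶜ from rfl]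
  exact this

lemma atom2 (hindep : iIndepFun ε P)
    {a b : ℤ} (hab : a ≠ b) {s t : Set ℝ} (hs : MeasurableSet s) (ht : MeasurableSet t) :
    P (ε a ⁻¹' s ∩ ε b ⁻¹' t) = P (ε a ⁻¹' s) * P (ε b ⁻¹' t) :=
  (hindep.indepFun hab).measure_inter_preimage_eq_mul s t hs ht

lemma atom3 (hindep : iIndepFun ε P)
    {a b c : ℤ} (hab : a ≠ b) (hac : a ≠ c) (hbc : b ≠ c)
    {s t u : Set ℝ} (hs : MeasurableSet s) (ht : MeasurableSet t) (hu : MeasurableSet u) :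
    P (ε a ⁻¹' s ∩ (ε b ⁻¹' t ∩ ε c ⁻¹' u))
      = P (ε a ⁻¹' s) * (P (ε b ⁻¹' t) * P (ε c ⁻¹' u)) := by
  classical
  have key := hindep.measure_inter_preimage_eq_mul (S := {a, b, c})
    (sets := fun i => if i = a then s else if i = b then t else u)
    (by
      intro i _
      split_ifs <;> assumption)
  simp only [Finset.set_biInter_insert, Finset.set_biInter_singleton,
    Finset.prod_insert, Finset.mem_insert, Finset.mem_singleton,
    Finset.prod_singleton] at key
  rw [Finset.prod_insert (by simp [hab, hac]), Finset.prod_insert (by simp [hbc]),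
    Finset.prod_singleton] at key
  simpa [hab.symm, hac.symm, hbc.symm] using key

lemma prob_mul_eq (hmeas : ∀ k, Measurable (ε k))
    (hindep : iIndepFun ε P)
    (hdist : ∀ k, P {ω | ε k ω = 1} = 1/2 ∧ P {ω | ε k ω = -1} = 1/2)
    {a b : ℤ} (hab : a ≠ b) {v : ℝ} (hv : v = 1 ∨ v = -1) :
    P {ω | ε a ω * ε b ω = v} = 1/2 := by
  classical
  set A1 : Set Ω := {ω | ε a ω = 1} ∩ {ω | ε b ω = v} with hA1
  set A2 : Set Ω := {ω | ε a ω = -1} ∩ {ω | ε b ω = -v} with hA2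
  have hsub : A1 ∪ A2 ⊆ {ω | ε a ω * ε b ω = v} := by
    rintro ω (⟨h1, h2⟩ | ⟨h1, h2⟩) <;> simp only [Set.mem_setOf_eq] at * <;>
      rw [h1, h2] <;> ring
  have hkey : P {ω | ε a ω * ε b ω = v} = P (A1 ∪ A2) := by
    have h1 : {ω | ε a ω * ε b ω = v} \ (A1 ∪ A2) ⊆ ({ω | ε a ω = 1 ∨ ε a ω = -1})ᶜ := by
      intro ω ⟨hm, hnot⟩
      simp only [Set.mem_compl_iff, Set.mem_setOf_eq] at *
      intro hor
      apply hnot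
      rcases hor with h | h
      · refine Or.inl ⟨h, ?_⟩
        show ε b ω = v
        rw [h] at hm; linarith
      · refine Or.inr ⟨h, ?_⟩
        show ε b ω = -v
        rw [h] at hm; linarith
    have h2 : (A1 ∪ A2) \ {ω | ε a ω * ε b ω = v} = ∅ := by
      rw [Set.diff_eq_empty]; exact hsub
    apply measure_congr
    rw [MeasureTheory.ae_eq_set]
    exact ⟨measure_mono_null h1 (null_k hmeas hdist a), by rw [h2]; exact measure_empty⟩
  rw [hkey, measure_union ?hd ?hm]
  · have e1 : P A1 = 1/2 * (1/2) := by
      have := atom2 hindep hab (measurableSet_singleton (1:ℝ)) (measurableSet_singleton v)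
      simp only [Set.preimage, Set.mem_singleton_iff] at this
      rw [hA1, this, meas_eq hdist a (Or.inl rfl), meas_eq hdist b hv]
    have e2 : P A2 = 1/2 * (1/2) := by
      have := atom2 hindep hab (measurableSet_singleton (-1:ℝ)) (measurableSet_singleton (-v))
      simp only [Set.preimage, Set.mem_singleton_iff] at this
      rw [hA2, this, meas_eq hdist a (Or.inr rfl),
        meas_eq hdist b (by rcases hv with h|h <;> subst h <;> norm_num)]
    rw [e1, e2]
    rw [← add_mul, ENNReal.add_halves, one_mul]
  case hd =>
    rw [Set.disjoint_left]
    rintro ω ⟨h1, _⟩ ⟨h2, _⟩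
    simp only [Set.mem_setOf_eq] at h1 h2
    rw [h1] at h2; norm_num at h2
  case hm =>
    exact ((hmeas a (measurableSet_singleton _)).inter (hmeas b (measurableSet_singleton _)))

lemma prob_smul_mul_eq (hmeas : ∀ k, Measurable (ε k))
    (hindep : iIndepFun ε P)
    (hdist : ∀ k, P {ω | ε k ω = 1} = 1/2 ∧ P {ω | ε k ω = -1} = 1/2)
    {a b : ℤ} (hab : a ≠ b) {σ v : ℝ} (hσ : σ = 1 ∨ σ = -1) (hv : v = 1 ∨ v = -1) :
    P {ω | σ * (ε a ω * ε b ω) = v} = 1/2 := by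
  have hset : {ω | σ * (ε a ω * ε b ω) = v} = {ω | ε a ω * ε b ω = σ * v} := by
    ext ω
    simp only [Set.mem_setOf_eq]
    rcases hσ with h | h <;> subst h <;> constructor <;> intro h' <;> linarith
  rw [hset]
  exact prob_mul_eq hmeas hindep hdist hab
    (by rcases hσ with h|h <;> rcases hv with h'|h' <;> subst h <;> subst h' <;> norm_num)

lemma map_eq_nu {Y : Ω → ℝ} (hY : Measurable Y)
    (h1 : P {ω | Y ω = 1} = 1/2) (h2 : P {ω | Y ω = -1} = 1/2) :
    Measure.map Y P
      = (1/2 : ℝ≥0∞) • Measure.dirac (1:ℝ) + (1/2 : ℝ≥0∞) • Measure.dirac (-1:ℝ) := by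
  classical
  have hm1 : MeasurableSet {ω | Y ω = 1} := hY (measurableSet_singleton 1)
  have hm2 : MeasurableSet {ω | Y ω = -1} := hY (measurableSet_singleton (-1))
  have hdisj : Disjoint {ω : Ω | Y ω = 1} {ω | Y ω = -1} := by
    rw [Set.disjoint_left]; intro ω ha hb
    simp only [Set.mem_setOf_eq] at ha hb; rw [ha] at hb; norm_num at hb
  have hGc : P ({ω | Y ω = 1} ∪ {ω | Y ω = -1})ᶜ = 0 := by
    rw [measure_compl (hm1.union hm2) (measure_ne_top _ _), measure_union hdisj hm2,
      h1, h2, ENNReal.add_halves, measure_univ, tsub_self]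
  ext s hs
  rw [Measure.map_apply hY hs]
  rw [← measure_inter_conull hGc, Set.inter_union_distrib_left]
  have e1 : Y ⁻¹' s ∩ {ω | Y ω = 1} = if (1:ℝ) ∈ s then {ω | Y ω = 1} else (∅ : Set Ω) := by
    split_ifs with h <;> ext ω <;>
      simp only [Set.mem_inter_iff, Set.mem_preimage, Set.mem_setOf_eq, Set.mem_empty_iff_false,
        iff_def] <;> constructor
    · rintro ⟨_, h'⟩; exact h'
    · intro h'; exact ⟨by rw [h']; exact h, h'⟩
    · rintro ⟨hins, h'⟩; rw [h'] at hins; exact h hins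
    · rintro ⟨⟩
  have e2 : Y ⁻¹' s ∩ {ω | Y ω = -1} = if (-1:ℝ) ∈ s then {ω | Y ω = -1} else (∅ : Set Ω) := by
    split_ifs with h <;> ext ω <;>
      simp only [Set.mem_inter_iff, Set.mem_preimage, Set.mem_setOf_eq, Set.mem_empty_iff_false,
        iff_def] <;> constructor
    · rintro ⟨_, h'⟩; exact h'
    · intro h'; exact ⟨by rw [h']; exact h, h'⟩
    · rintro ⟨hins, h'⟩; rw [h'] at hins; exact h hins
    · rintro ⟨⟩
  rw [measure_union (hdisj.mono Set.inter_subset_right Set.inter_subset_right)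
      ((hY hs).inter hm2), e1, e2]
  simp only [Measure.coe_add, Pi.add_apply, Measure.smul_apply, smul_eq_mul,
    Measure.dirac_apply' _ hs, Set.indicator_apply]
  split_ifs with ha hb hb <;> simp [h1, h2, measure_empty]

lemma integral_zero_of_fair {Y : Ω → ℝ} (hY : Measurable Y)
    (h1 : P {ω | Y ω = 1} = 1/2) (h2 : P {ω | Y ω = -1} = 1/2)
    (hb : ∀ᵐ ω ∂P, Y ω = 1 ∨ Y ω = -1) :
    ∫ ω, Y ω ∂P = 0 := by
  have hm1 : MeasurableSet {ω | Y ω = 1} := hY (measurableSet_singleton 1)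
  have hm2 : MeasurableSet {ω | Y ω = -1} := hY (measurableSet_singleton (-1))
  have heq : Y =ᵐ[P] fun ω =>
      Set.indicator {ω | Y ω = 1} (fun _ => (1:ℝ)) ω
        + Set.indicator {ω | Y ω = -1} (fun _ => (-1:ℝ)) ω := by
    filter_upwards [hb] with ω h
    rcases h with h | h <;>
      simp [Set.indicator_apply, Set.mem_setOf_eq, h] <;> norm_num
  rw [integral_congr_ae heq, integral_add
      ((integrable_const (1:ℝ)).indicator hm1) ((integrable_const (-1:ℝ)).indicator hm2),
    integral_indicator_const _ hm1, integral_indicator_const _ hm2, measureReal_def,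
    measureReal_def, h1, h2]
  simp [ENNReal.toReal_div]

lemma ind1 (hmeas : ∀ k, Measurable (ε k))
    (hindep : iIndepFun ε P)
    (hdist : ∀ k, P {ω | ε k ω = 1} = 1/2 ∧ P {ω | ε k ω = -1} = 1/2)
    {a b c : ℤ} (hab : a ≠ b) (hac : a ≠ c) (hbc : b ≠ c) :
    IndepFun (fun ω => ε a ω * ε b ω) (fun ω => ε a ω * ε c ω) P := by
  classical
  have map_nu : ∀ k : ℤ, Measure.map (ε k) P
      = (1/2 : ℝ≥0∞) • Measure.dirac (1:ℝ) + (1/2 : ℝ≥0∞) • Measure.dirac (-1:ℝ) :=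
    fun k => map_eq_nu (hmeas k) (hdist k).1 (hdist k).2
  have symm : ∀ (i : ℤ) (u : Set ℝ), MeasurableSet u →
      P (ε i ⁻¹' ((fun x : ℝ => -x) ⁻¹' u)) = P (ε i ⁻¹' u) := by
    intro i u hu
    have hnu : MeasurableSet ((fun x : ℝ => -x) ⁻¹' u) := measurable_neg hu
    rw [← Measure.map_apply (hmeas i) hu, ← Measure.map_apply (hmeas i) hnu, map_nu i]
    simp only [Measure.coe_add, Pi.add_apply, Measure.smul_apply, smul_eq_mul,
      Measure.dirac_apply' _ hu, Measure.dirac_apply' _ hnu, Set.indicator_apply,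
      Set.mem_preimage]
    norm_num
    split_ifs <;> simp_all <;> ring
  have decomp : ∀ (u v : Set ℝ), MeasurableSet u → MeasurableSet v →
      P ((fun ω => ε a ω * ε b ω) ⁻¹' u ∩ (fun ω => ε a ω * ε c ω) ⁻¹' v)
        = 1/2 * (P (ε b ⁻¹' u) * P (ε c ⁻¹' v))
          + 1/2 * (P (ε b ⁻¹' ((fun x : ℝ => -x) ⁻¹' u))
              * P (ε c ⁻¹' ((fun x : ℝ => -x) ⁻¹' v))) := by
    intro u v hu hv
    set L : Set Ω := (fun ω => ε a ω * ε b ω) ⁻¹' u ∩ (fun ω => ε a ω * ε c ω) ⁻¹' v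
    set R1 : Set Ω := ε a ⁻¹' {(1:ℝ)} ∩ (ε b ⁻¹' u ∩ ε c ⁻¹' v)
    set R2 : Set Ω := ε a ⁻¹' {(-1:ℝ)}
      ∩ (ε b ⁻¹' ((fun x : ℝ => -x) ⁻¹' u) ∩ ε c ⁻¹' ((fun x : ℝ => -x) ⁻¹' v))
    have hsub : R1 ∪ R2 ⊆ L := by
      rintro ω (⟨h1, h2, h3⟩ | ⟨h1, h2, h3⟩) <;>
        simp only [Set.mem_preimage, Set.mem_singleton_iff] at h1 h2 h3 <;>
        constructor <;> simp only [Set.mem_preimage] <;> rw [h1]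
      · rw [one_mul]; exact h2
      · rw [one_mul]; exact h3
      · rw [neg_one_mul]; exact h2
      · rw [neg_one_mul]; exact h3
    have hkey : P L = P (R1 ∪ R2) := by
      apply measure_congr
      rw [MeasureTheory.ae_eq_set]
      constructor
      · apply measure_mono_null _ (null_k hmeas hdist a)
        rintro ω ⟨hL, hnot⟩
        simp only [Set.mem_compl_iff, Set.mem_setOf_eq]
        intro hor
        apply hnot
        obtain ⟨hLu, hLv⟩ := hL
        simp only [Set.mem_preimage] at hLu hLv
        rcases hor with h | h
        · refine Or.inl ⟨h, ?_, ?_⟩ <;> simp only [Set.mem_preimage]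
          · rw [h, one_mul] at hLu; exact hLu
          · rw [h, one_mul] at hLv; exact hLv
        · refine Or.inr ⟨h, ?_, ?_⟩ <;> simp only [Set.mem_preimage]
          · rw [h, neg_one_mul] at hLu; exact hLu
          · rw [h, neg_one_mul] at hLv; exact hLv
      · rw [Set.diff_eq_empty.mpr hsub]; exact measure_empty
    rw [hkey, measure_union ?hd ?hm]
    · have e1 := atom3 hindep hab hac hbc (measurableSet_singleton (1:ℝ)) hu hv
      have e2 := atom3 hindep hab hac hbc (measurableSet_singleton (-1:ℝ))
        (measurable_neg hu) (measurable_neg hv)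
      rw [e1, e2]
      have p1 : P (ε a ⁻¹' {(1:ℝ)}) = 1/2 := meas_eq hdist a (Or.inl rfl)
      have p2 : P (ε a ⁻¹' {(-1:ℝ)}) = 1/2 := meas_eq hdist a (Or.inr rfl)
      rw [p1, p2]
    case hd =>
      rw [Set.disjoint_left]
      rintro ω ⟨h1, _⟩ ⟨h2, _⟩
      simp only [Set.mem_preimage, Set.mem_singleton_iff] at h1 h2
      rw [h1] at h2; norm_num at h2
    case hm =>
      exact (hmeas a (measurableSet_singleton _)).inter
        (((hmeas b) (measurable_neg hu)).inter ((hmeas c) (measurable_neg hv)))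
  rw [indepFun_iff_measure_inter_preimage_eq_mul]
  intro s t hs ht
  have h1 := decomp s t hs ht
  have h2 := decomp s Set.univ hs MeasurableSet.univ
  have h3 := decomp Set.univ t MeasurableSet.univ ht
  have huniv : ∀ i : ℤ, ε i ⁻¹' (Set.univ : Set ℝ) = Set.univ := fun i => Set.preimage_univ
  have hnuniv : ((fun x : ℝ => -x) ⁻¹' (Set.univ : Set ℝ)) = Set.univ := Set.preimage_univ
  rw [hnuniv] at h2 h3
  rw [huniv] at h2 h3
  simp only [measure_univ, mul_one, one_mul] at h2 h3
  have hXs : P ((fun ω => ε a ω * ε b ω) ⁻¹' s) = P (ε b ⁻¹' s) := by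
    have : (fun ω => ε a ω * ε b ω) ⁻¹' s ∩ (fun ω => ε a ω * ε c ω) ⁻¹' Set.univ
        = (fun ω => ε a ω * ε b ω) ⁻¹' s := by simp
    rw [this] at h2
    rw [h2, symm b s hs, ← add_mul, ENNReal.add_halves, one_mul]
  have hYt : P ((fun ω => ε a ω * ε c ω) ⁻¹' t) = P (ε c ⁻¹' t) := by
    have : (fun ω => ε a ω * ε b ω) ⁻¹' Set.univ ∩ (fun ω => ε a ω * ε c ω) ⁻¹' t
        = (fun ω => ε a ω * ε c ω) ⁻¹' t := by simp
    rw [this] at h3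
    rw [h3, symm c t ht, ← add_mul, ENNReal.add_halves, one_mul]
  rw [h1, hXs, hYt, symm b s hs, symm c t ht, ← add_mul, ENNReal.add_halves, one_mul]

lemma one_sided (hmeas : ∀ k, Measurable (ε k))
    (hindep : iIndepFun ε P)
    (hdist : ∀ k, P {ω | ε k ω = 1} = 1/2 ∧ P {ω | ε k ω = -1} = 1/2)
    {j : ℤ} (hj : j ≠ 0) {d : ℤ} (hd : d = 1 ∨ d = -1) (c : ℤ)
    {σ : ℝ} (hσ : σ = 1 ∨ σ = -1) :
    ∀ᵐ ω ∂P, Tendsto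
      (fun T : ℕ => (∑ t ∈ Finset.range T, σ * (ε (d*t+c) ω * ε (d*t+c+j) ω)) / T)
      atTop (𝓝 0) := by
  classical
  set X : ℕ → Ω → ℝ := fun t ω => σ * (ε (d*t+c) ω * ε (d*t+c+j) ω) with hX
  have hd0 : ∀ t : ℕ, d*(t:ℤ)+c ≠ d*t+c+j := by intro t; omega
  have hXmeas : ∀ t, Measurable (X t) :=
    fun t => measurable_const.mul ((hmeas _).mul (hmeas _))
  have hXv : ∀ (t : ℕ) {v : ℝ}, (v = 1 ∨ v = -1) → P {ω | X t ω = v} = 1/2 :=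
    fun t v hv => prob_smul_mul_eq hmeas hindep hdist (hd0 t) hσ hv
  have hXval : ∀ t, ∀ᵐ ω ∂P, X t ω = 1 ∨ X t ω = -1 := by
    intro t
    filter_upwards [good hmeas hdist] with ω h
    rcases h (d*t+c) with h1 | h1 <;> rcases h (d*t+c+j) with h2 | h2 <;>
      rcases hσ with h3 | h3 <;> rw [hX] <;> simp only [h1, h2, h3] <;> norm_num
  have hint : Integrable (X 0) P := by
    apply Integrable.mono' (integrable_const (1:ℝ)) (hXmeas 0).aestronglyMeasurable
    filter_upwards [hXval 0] with ω h
    rcases h with h | h <;> rw [h] <;> norm_num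
  have hident : ∀ t, IdentDistrib (X t) (X 0) P P := by
    intro t
    exact ⟨(hXmeas t).aemeasurable, (hXmeas 0).aemeasurable, by
      rw [map_eq_nu (hXmeas t) (hXv t (Or.inl rfl)) (hXv t (Or.inr rfl)),
        map_eq_nu (hXmeas 0) (hXv 0 (Or.inl rfl)) (hXv 0 (Or.inr rfl))]⟩
  have hpair : Pairwise (Function.onFun (IndepFun · · P) X) := by
    intro s t hst
    have hst' : (s:ℤ) ≠ (t:ℤ) := by exact_mod_cast hst
    have core : IndepFun (fun ω => ε (d*s+c) ω * ε (d*s+c+j) ω)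
        (fun ω => ε (d*t+c) ω * ε (d*t+c+j) ω) P := by
      by_cases h1 : d*(s:ℤ)+c = d*t+c+j
      · have e2 : (fun ω => ε (d*(t:ℤ)+c) ω * ε (d*t+c+j) ω)
            = (fun ω => ε (d*(s:ℤ)+c) ω * ε (d*t+c) ω) := by
          funext ω; rw [← h1, mul_comm]
        rw [e2]
        exact ind1 hmeas hindep hdist (by omega)
          (by rcases hd with h|h <;> subst h <;> omega)
          (by rcases hd with h|h <;> subst h <;> omega)
      · by_cases h2 : d*(s:ℤ)+c+j = d*t+c
        · have e1 : (fun ω => ε (d*(s:ℤ)+c) ω * ε (d*s+c+j) ω)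
              = (fun ω => ε (d*(t:ℤ)+c) ω * ε (d*s+c) ω) := by
            funext ω; rw [← h2, mul_comm]
          rw [e1]
          exact ind1 hmeas hindep hdist (by omega)
            (by rcases hd with h|h <;> subst h <;> omega)
            (by rcases hd with h|h <;> subst h <;> omega)
        · have := hindep.indepFun_mul_mul hmeas (d*(s:ℤ)+c) (d*s+c+j) (d*t+c) (d*t+c+j)
            (by rcases hd with h|h <;> subst h <;> omega) h1 h2
            (by rcases hd with h|h <;> subst h <;> omega)
          exact this
    have comp := core.comp (measurable_const_mul σ) (measurable_const_mul σ)
    exact comp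
  have hmean : P[X 0] = 0 :=
    integral_zero_of_fair (hXmeas 0) (hXv 0 (Or.inl rfl)) (hXv 0 (Or.inr rfl)) (hXval 0)
  have := strong_law_ae_real X hint hpair hident
  rw [hmean] at this
  filter_upwards [this] with ω h
  exact h

lemma split_sum (N : ℕ) (f : ℤ → ℝ) :
    ∑ m ∈ Finset.Icc (-(N:ℤ)) (N:ℤ), f m
      = (∑ k ∈ Finset.Icc (-((N:ℤ)/2)) ((N:ℤ)/2), f (2*k))
        + ∑ k ∈ Finset.Icc (-(((N:ℤ)+1)/2)) (((N:ℤ)-1)/2), f (2*k+1) := by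
  classical
  have h1 : ∑ k ∈ Finset.Icc (-((N:ℤ)/2)) ((N:ℤ)/2), f (2*k)
      = ∑ m ∈ (Finset.Icc (-((N:ℤ)/2)) ((N:ℤ)/2)).image (fun k => 2*k), f m :=
    (Finset.sum_image (by intro x _ y _ h; omega)).symm
  have h2 : ∑ k ∈ Finset.Icc (-(((N:ℤ)+1)/2)) (((N:ℤ)-1)/2), f (2*k+1)
      = ∑ m ∈ (Finset.Icc (-(((N:ℤ)+1)/2)) (((N:ℤ)-1)/2)).image (fun k => 2*k+1), f m :=
    (Finset.sum_image (by intro x _ y _ h; have h' : 2*x+1 = 2*y+1 := h; omega)).symm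
  have hd : Disjoint ((Finset.Icc (-((N:ℤ)/2)) ((N:ℤ)/2)).image (fun k => 2*k))
      ((Finset.Icc (-(((N:ℤ)+1)/2)) (((N:ℤ)-1)/2)).image (fun k => 2*k+1)) := by
    rw [Finset.disjoint_left]
    rintro m hm1 hm2
    simp only [Finset.mem_image, Finset.mem_Icc] at hm1 hm2
    obtain ⟨k, _, rfl⟩ := hm1
    obtain ⟨k', _, h⟩ := hm2
    omega
  rw [h1, h2, ← Finset.sum_union hd]
  apply Finset.sum_congr _ (fun _ _ => rfl)
  ext m
  simp only [Finset.mem_union, Finset.mem_image, Finset.mem_Icc]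
  constructor
  · intro hm
    rcases Int.even_or_odd m with ⟨k, hk⟩ | ⟨k, hk⟩
    · exact Or.inl ⟨k, by omega, by omega⟩
    · exact Or.inr ⟨k, by omega, by omega⟩
  · rintro (⟨k, hk, rfl⟩ | ⟨k, hk, rfl⟩) <;> omega

lemma sum_Icc_eq_ranges (g : ℤ → ℝ) (l u : ℤ) (hl : l ≤ 0) (hu : -1 ≤ u) :
    ∑ k ∈ Finset.Icc l u, g k
      = (∑ t ∈ Finset.range (u+1).toNat, g t)
        + ∑ t ∈ Finset.range (-l).toNat, g (-1 - t) := by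
  classical
  have hsplit : Finset.Icc l u = Finset.Icc 0 u ∪ Finset.Icc l (-1) := by
    ext m; simp only [Finset.mem_union, Finset.mem_Icc]; omega
  have hdisj : Disjoint (Finset.Icc (0:ℤ) u) (Finset.Icc l (-1)) := by
    rw [Finset.disjoint_left]; intro m h1 h2
    simp only [Finset.mem_Icc] at h1 h2; omega
  rw [hsplit, Finset.sum_union hdisj]
  congr 1
  · apply Finset.sum_nbij' (i := fun (k : ℤ) => k.toNat) (j := fun (t : ℕ) => (t : ℤ)) <;>
      intro a ha <;> simp only [Finset.mem_Icc, Finset.mem_range] at * <;> try omega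
    · congr 1; omega
  · apply Finset.sum_nbij' (i := fun (k : ℤ) => (-1 - k).toNat)
      (j := fun (t : ℕ) => -1 - (t : ℤ)) <;>
      intro a ha <;> simp only [Finset.mem_Icc, Finset.mem_range] at * <;> try omega
    · congr 1; omega

lemma squeeze (S : ℕ → ℝ) (hS : Filter.Tendsto (fun T : ℕ => S T / T) atTop (𝓝 0))
    (T : ℕ → ℕ) (hT : Filter.Tendsto T atTop atTop) (hTb : ∀ N, T N ≤ 2*N+1) :
    Filter.Tendsto (fun N : ℕ => S (T N) / (2*(N:ℝ)+1)) atTop (𝓝 0) := by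
  have comp : Filter.Tendsto (fun N => S (T N) / (T N : ℝ)) atTop (𝓝 0) := hS.comp hT
  have habs : Filter.Tendsto (fun N => |S (T N) / (T N : ℝ)|) atTop (𝓝 0) := by
    have := comp.abs; simpa using this
  apply squeeze_zero_norm' ?_ habs
  filter_upwards [hT.eventually_ge_atTop 1] with N hN
  have h1 : (1:ℝ) ≤ (T N : ℝ) := by exact_mod_cast hN
  have h2 : (T N : ℝ) ≤ 2*(N:ℝ)+1 := by exact_mod_cast hTb N
  rw [Real.norm_eq_abs, abs_div, abs_div]
  have h3 : |(2*(N:ℝ)+1)| = 2*(N:ℝ)+1 := abs_of_pos (by positivity)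
  have h4 : |(T N : ℝ)| = (T N : ℝ) := abs_of_pos (by linarith)
  rw [h3, h4]
  exact div_le_div_of_nonneg_left (abs_nonneg _) (by linarith) h2

lemma count_tendsto (c : ℕ → ℤ) (h : ∀ N, |2 * c N - (2*(N:ℤ)+1)| ≤ 2) :
    Filter.Tendsto (fun N : ℕ => ((c N : ℝ)) / (2*(N:ℝ)+1)) atTop (𝓝 (1/2)) := by
  rw [show (1/2 : ℝ) = 0 + 1/2 by ring]
  have base : Filter.Tendsto (fun N : ℕ => (1:ℝ)/(2*(N:ℝ)+1)) atTop (𝓝 0) := by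
    simp only [one_div]
    apply Filter.Tendsto.comp tendsto_inv_atTop_zero
    apply Filter.tendsto_atTop_add_const_right
    exact (tendsto_natCast_atTop_atTop).const_mul_atTop two_pos
  have key : Filter.Tendsto (fun N : ℕ => (c N : ℝ)/(2*(N:ℝ)+1) - 1/2) atTop (𝓝 0) := by
    apply squeeze_zero_norm' ?_ base
    filter_upwards with N
    have hden : (0:ℝ) < 2*(N:ℝ)+1 := by positivity
    have hN := h N
    have hNr : |2 * (c N : ℝ) - (2*(N:ℝ)+1)| ≤ 2 := by
      have : ((|2 * c N - (2*(N:ℤ)+1)| : ℤ) : ℝ) ≤ 2 := by exact_mod_cast hN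
      rw [Int.cast_abs] at this; push_cast at this ⊢; linarith [this]
    rw [Real.norm_eq_abs, show (c N : ℝ)/(2*(N:ℝ)+1) - 1/2
      = (2 * (c N : ℝ) - (2*(N:ℝ)+1)) / (2*(2*(N:ℝ)+1)) by field_simp]
    rw [abs_div, abs_of_pos (by linarith : (0:ℝ) < 2*(2*(N:ℝ)+1))]
    rw [div_le_div_iff₀ (by linarith) hden]
    calc |2 * (c N : ℝ) - (2*(N:ℝ)+1)| * (2*(N:ℝ)+1) ≤ 2 * (2*(N:ℝ)+1) :=
          mul_le_mul_of_nonneg_right hNr (by linarith)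
      _ = 1 * (2*(2*(N:ℝ)+1)) := by ring
  have := key.add_const (1/2)
  simpa using this

lemma const_half (r : ℝ) (l u : ℕ → ℤ)
    (hcount : ∀ N, |2*((u N) + 1 - l N) - (2*(N:ℤ)+1)| ≤ 2)
    (hnn : ∀ N, 0 ≤ u N + 1 - l N) :
    Filter.Tendsto (fun N : ℕ => (1/(2*(N:ℝ)+1)) * ∑ k ∈ Finset.Icc (l N) (u N), r)
      atTop (𝓝 (r/2)) := by
  have hsum : ∀ N : ℕ, (1/(2*(N:ℝ)+1)) * ∑ k ∈ Finset.Icc (l N) (u N), r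
      = (((u N + 1 - l N : ℤ) : ℝ) / (2*(N:ℝ)+1)) * r := by
    intro N
    rw [Finset.sum_const, Int.card_Icc, nsmul_eq_mul]
    have hc : (((u N + 1 - l N).toNat : ℕ) : ℝ) = ((u N + 1 - l N : ℤ) : ℝ) := by
      have := Int.toNat_of_nonneg (hnn N)
      exact_mod_cast congrArg (Int.cast : ℤ → ℝ) this
    rw [hc]; ring
  have := (count_tendsto (fun N => u N + 1 - l N) hcount).mul_const r
  rw [show (1/2 : ℝ) * r = r/2 by ring] at this
  exact Tendsto.congr (fun N => (hsum N).symm) this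

lemma rand_half (hmeas : ∀ k, Measurable (ε k))
    (hindep : iIndepFun ε P)
    (hdist : ∀ k, P {ω | ε k ω = 1} = 1/2 ∧ P {ω | ε k ω = -1} = 1/2)
    {j : ℤ} (hj : j ≠ 0) {σ : ℝ} (hσ : σ = 1 ∨ σ = -1) (l u : ℕ → ℤ)
    (hl0 : ∀ N, l N ≤ 0) (hu0 : ∀ N, -1 ≤ u N)
    (hub : ∀ N, (u N + 1).toNat ≤ 2*N+1) (hlb : ∀ N, (-(l N)).toNat ≤ 2*N+1)
    (hut : Filter.Tendsto (fun N => (u N + 1).toNat) atTop atTop)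
    (hlt : Filter.Tendsto (fun N => (-(l N)).toNat) atTop atTop) :
    ∀ᵐ ω ∂P, Filter.Tendsto
      (fun N : ℕ => (1/(2*(N:ℝ)+1)) * ∑ k ∈ Finset.Icc (l N) (u N), σ * (ε k ω * ε (k+j) ω))
      atTop (𝓝 0) := by
  filter_upwards [one_sided hmeas hindep hdist hj (Or.inl rfl) 0 hσ,
    one_sided hmeas hindep hdist hj (Or.inr rfl) (-1) hσ]
    with ω h1 h2
  simp only [one_mul, add_zero] at h1
  have e2 : ∀ t : ℕ, (-1 : ℤ)*t+(-1) = -1 - t := by intro t; ring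
  simp only [e2] at h2
  have key : ∀ N : ℕ, (1/(2*(N:ℝ)+1)) * ∑ k ∈ Finset.Icc (l N) (u N), σ * (ε k ω * ε (k+j) ω)
      = (∑ t ∈ Finset.range ((u N + 1).toNat), σ * (ε t ω * ε ((t:ℤ)+j) ω)) / (2*(N:ℝ)+1)
        + (∑ t ∈ Finset.range ((-(l N)).toNat), σ * (ε (-1-(t:ℤ)) ω * ε (-1-(t:ℤ)+j) ω))
            / (2*(N:ℝ)+1) := by
    intro N
    rw [sum_Icc_eq_ranges (fun k => σ * (ε k ω * ε (k+j) ω)) (l N) (u N) (hl0 N) (hu0 N)]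
    ring
  have t1 := squeeze (fun T => ∑ t ∈ Finset.range T, σ * (ε t ω * ε ((t:ℤ)+j) ω)) h1
    (fun N => (u N + 1).toNat) hut hub
  have t2 := squeeze (fun T => ∑ t ∈ Finset.range T, σ * (ε (-1-(t:ℤ)) ω * ε (-1-(t:ℤ)+j) ω)) h2
    (fun N => (-(l N)).toNat) hlt hlb
  have := t1.add t2
  rw [add_zero] at this
  exact Tendsto.congr (fun N => (key N).symm) this

end DMSProof

open DMSProof in
/-- For the even-placement realisation of the dimeric molecule shift
(`w (2k) = ε k`, `w (2k+1) = -ε k` with `(ε k)` i.i.d. fair ±1 random variables),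
almost surely, for every `n : ℤ`, the averaged correlation sums
`(1/(2N+1)) · Σ_{m=-N}^{N} w m · w (m+n)` converge to `η n`, where
`η 0 = 1`, `η 1 = η (-1) = -1/2` and `η n = 0` for `|n| ≥ 2`. -/
theorem dms_autocorrelation
    {Ω : Type*} [MeasurableSpace Ω] (P : Measure Ω) [IsProbabilityMeasure P]
    (ε : ℤ → Ω → ℝ) (hmeas : ∀ k, Measurable (ε k))
    (hindep : iIndepFun ε P)
    (hdist : ∀ k, P {ω | ε k ω = 1} = 1/2 ∧ P {ω | ε k ω = -1} = 1/2)
    (w : ℤ → Ω → ℝ)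
    (hw_even : ∀ k ω, w (2*k) ω = ε k ω)
    (hw_odd : ∀ k ω, w (2*k+1) ω = - ε k ω)
    (η : ℤ → ℝ)
    (hη0 : η 0 = 1) (hη1 : η 1 = -1/2) (hηm1 : η (-1) = -1/2)
    (hηn : ∀ n : ℤ, 2 ≤ |n| → η n = 0) :
    ∀ᵐ ω ∂P, ∀ n : ℤ,
      Tendsto (fun N : ℕ =>
          (1 / (2*(N:ℝ)+1)) *
            ∑ m ∈ Finset.Icc (-(N:ℤ)) (N:ℤ), w m ω * w (m+n) ω)
        atTop (nhds (η n)) := by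

  classical
  -- windows
  set lE : ℕ → ℤ := fun N => -((N:ℤ)/2) with hlE
  set uE : ℕ → ℤ := fun N => (N:ℤ)/2 with huE
  set lO : ℕ → ℤ := fun N => -(((N:ℤ)+1)/2) with hlO
  set uO : ℕ → ℤ := fun N => ((N:ℤ)-1)/2 with huO
  have hrandE : ∀ {j : ℤ}, j ≠ 0 → ∀ {σ : ℝ}, (σ = 1 ∨ σ = -1) →
      ∀ᵐ ω ∂P, Tendsto
        (fun N : ℕ => (1/(2*(N:ℝ)+1)) * ∑ k ∈ Finset.Icc (lE N) (uE N), σ * (ε k ω * ε (k+j) ω))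
        atTop (nhds 0) := by
    intro j hj σ hσ
    apply rand_half hmeas hindep hdist hj hσ lE uE
    · intro N; simp only [hlE]; omega
    · intro N; simp only [huE]; omega
    · intro N; simp only [huE]; omega
    · intro N; simp only [hlE]; omega
    · rw [Filter.tendsto_atTop_atTop]
      intro b; exact ⟨2*b, fun a ha => by simp only [huE]; omega⟩
    · rw [Filter.tendsto_atTop_atTop]
      intro b; exact ⟨2*b+2, fun a ha => by simp only [hlE]; omega⟩
  have hrandO : ∀ {j : ℤ}, j ≠ 0 → ∀ {σ : ℝ}, (σ = 1 ∨ σ = -1) →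
      ∀ᵐ ω ∂P, Tendsto
        (fun N : ℕ => (1/(2*(N:ℝ)+1)) * ∑ k ∈ Finset.Icc (lO N) (uO N), σ * (ε k ω * ε (k+j) ω))
        atTop (nhds 0) := by
    intro j hj σ hσ
    apply rand_half hmeas hindep hdist hj hσ lO uO
    · intro N; simp only [hlO]; omega
    · intro N; simp only [huO]; omega
    · intro N; simp only [huO]; omega
    · intro N; simp only [hlO]; omega
    · rw [Filter.tendsto_atTop_atTop]
      intro b; exact ⟨2*b+2, fun a ha => by simp only [huO]; omega⟩
    · rw [Filter.tendsto_atTop_atTop]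
      intro b; exact ⟨2*b+2, fun a ha => by simp only [hlO]; omega⟩
  have hconstE : ∀ r : ℝ, Tendsto
      (fun N : ℕ => (1/(2*(N:ℝ)+1)) * ∑ k ∈ Finset.Icc (lE N) (uE N), r)
      atTop (nhds (r/2)) := by
    intro r
    apply const_half r lE uE
    · intro N
      rw [abs_le]
      constructor <;> simp only [hlE, huE] <;> omega
    · intro N; simp only [hlE, huE]; omega
  have hconstO : ∀ r : ℝ, Tendsto
      (fun N : ℕ => (1/(2*(N:ℝ)+1)) * ∑ k ∈ Finset.Icc (lO N) (uO N), r)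
      atTop (nhds (r/2)) := by
    intro r
    apply const_half r lO uO
    · intro N
      rw [abs_le]
      constructor <;> simp only [hlO, huO] <;> omega
    · intro N; simp only [hlO, huO]; omega
  rw [ae_all_iff]
  intro n
  rcases Int.even_or_odd n with ⟨j, hn⟩ | ⟨j, hn⟩
  · by_cases hj : j = 0
    · -- n = 0
      subst hj
      have hn0 : n = 0 := by omega
      subst hn0
      filter_upwards [good hmeas hdist] with ω hg
      have hsum : ∀ N : ℕ, (1/(2*(N:ℝ)+1))
          * ∑ m ∈ Finset.Icc (-(N:ℤ)) (N:ℤ), w m ω * w (m+0) ω = 1 := by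
        intro N
        have hterm : ∀ m ∈ Finset.Icc (-(N:ℤ)) (N:ℤ), w m ω * w (m+0) ω = 1 := by
          intro m _
          rw [add_zero]
          rcases Int.even_or_odd m with ⟨k, hk⟩ | ⟨k, hk⟩
          · rw [show m = 2*k by omega, hw_even]
            rcases hg k with h|h <;> rw [h] <;> norm_num
          · rw [show m = 2*k+1 by omega, hw_odd]
            rcases hg k with h|h <;> rw [h] <;> norm_num
        rw [Finset.sum_congr rfl hterm, Finset.sum_const, Int.card_Icc,
          show ((N:ℤ) + 1 - -(N:ℤ)).toNat = 2*N+1 by omega, nsmul_eq_mul]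
        have hpos : (0:ℝ) < 2*(N:ℝ)+1 := by positivity
        push_cast
        field_simp
      rw [hη0]
      exact Tendsto.congr (fun N => (hsum N).symm) tendsto_const_nhds
    · -- n = 2j, j ≠ 0
      filter_upwards [good hmeas hdist, hrandE hj (Or.inl rfl), hrandO hj (Or.inl rfl)]
        with ω hg hrE hrO
      have key : ∀ N : ℕ, (1/(2*(N:ℝ)+1))
            * ∑ m ∈ Finset.Icc (-(N:ℤ)) (N:ℤ), w m ω * w (m+n) ω
          = (1/(2*(N:ℝ)+1)) * ∑ k ∈ Finset.Icc (lE N) (uE N), (1:ℝ) * (ε k ω * ε (k+j) ω)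
            + (1/(2*(N:ℝ)+1)) * ∑ k ∈ Finset.Icc (lO N) (uO N), (1:ℝ) * (ε k ω * ε (k+j) ω) := by
        intro N
        rw [split_sum N (fun m => w m ω * w (m+n) ω), mul_add]
        congr 1
        · congr 1
          apply Finset.sum_congr rfl
          intro k _
          rw [show 2*k + n = 2*(k+j) by omega, hw_even, hw_even, one_mul]
        · congr 1
          apply Finset.sum_congr rfl
          intro k _
          rw [show 2*k+1+n = 2*(k+j)+1 by omega, hw_odd, hw_odd]
          ring
      rw [show η n = 0 from hηn n (le_abs.mpr (by omega))]
      have := hrE.add hrO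
      rw [add_zero] at this
      exact Tendsto.congr (fun N => (key N).symm) this
  · -- n odd, n = 2j+1
    by_cases hj0 : j = 0
    · -- n = 1
      subst hj0
      have hn1 : n = 1 := by omega
      subst hn1
      filter_upwards [good hmeas hdist, hrandO (show (1:ℤ) ≠ 0 by norm_num) (Or.inr rfl)]
        with ω hg hrO
      have key : ∀ N : ℕ, (1/(2*(N:ℝ)+1))
            * ∑ m ∈ Finset.Icc (-(N:ℤ)) (N:ℤ), w m ω * w (m+1) ω
          = (1/(2*(N:ℝ)+1)) * ∑ k ∈ Finset.Icc (lE N) (uE N), (-1:ℝ)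
            + (1/(2*(N:ℝ)+1)) * ∑ k ∈ Finset.Icc (lO N) (uO N), (-1:ℝ) * (ε k ω * ε (k+1) ω) := by
        intro N
        rw [split_sum N (fun m => w m ω * w (m+1) ω), mul_add]
        congr 1
        · congr 1
          apply Finset.sum_congr rfl
          intro k _
          rw [show 2*k + 1 = 2*k+1 from rfl, hw_even, hw_odd]
          rcases hg k with h|h <;> rw [h] <;> norm_num
        · congr 1
          apply Finset.sum_congr rfl
          intro k _
          rw [show 2*k+1+1 = 2*(k+1) by ring, hw_odd, hw_even]
          ring
      rw [hη1]
      have := (hconstE (-1)).add hrO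
      rw [add_zero] at this
      rw [show (-1:ℝ)/2 = -1/2 by norm_num] at this
      exact Tendsto.congr (fun N => (key N).symm) this
    · by_cases hjm : j = -1
      · -- n = -1
        subst hjm
        have hn1 : n = -1 := by omega
        subst hn1
        filter_upwards [good hmeas hdist, hrandE (show (-1:ℤ) ≠ 0 by norm_num) (Or.inr rfl)]
          with ω hg hrE
        have key : ∀ N : ℕ, (1/(2*(N:ℝ)+1))
              * ∑ m ∈ Finset.Icc (-(N:ℤ)) (N:ℤ), w m ω * w (m+(-1)) ω
            = (1/(2*(N:ℝ)+1)) * ∑ k ∈ Finset.Icc (lE N) (uE N), (-1:ℝ) * (ε k ω * ε (k+(-1)) ω)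
              + (1/(2*(N:ℝ)+1)) * ∑ k ∈ Finset.Icc (lO N) (uO N), (-1:ℝ) := by
          intro N
          rw [split_sum N (fun m => w m ω * w (m+(-1)) ω), mul_add]
          congr 1
          · congr 1
            apply Finset.sum_congr rfl
            intro k _
            rw [show 2*k + (-1) = 2*(k+(-1))+1 by ring, hw_even, hw_odd]
            ring
          · congr 1
            apply Finset.sum_congr rfl
            intro k _
            rw [show 2*k+1+(-1) = 2*k by ring, hw_odd, hw_even]
            rcases hg k with h|h <;> rw [h] <;> norm_num
        rw [hηm1]
        have := hrE.add (hconstO (-1))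
        rw [zero_add] at this
        rw [show (-1:ℝ)/2 = -1/2 by norm_num] at this
        exact Tendsto.congr (fun N => (key N).symm) this
      · -- |n| ≥ 3
        have hj1 : j + 1 ≠ 0 := by omega
        filter_upwards [good hmeas hdist, hrandE hj0 (Or.inr rfl), hrandO hj1 (Or.inr rfl)]
          with ω hg hrE hrO
        have key : ∀ N : ℕ, (1/(2*(N:ℝ)+1))
              * ∑ m ∈ Finset.Icc (-(N:ℤ)) (N:ℤ), w m ω * w (m+n) ω
            = (1/(2*(N:ℝ)+1)) * ∑ k ∈ Finset.Icc (lE N) (uE N), (-1:ℝ) * (ε k ω * ε (k+j) ω)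
              + (1/(2*(N:ℝ)+1))
                * ∑ k ∈ Finset.Icc (lO N) (uO N), (-1:ℝ) * (ε k ω * ε (k+(j+1)) ω) := by
          intro N
          rw [split_sum N (fun m => w m ω * w (m+n) ω), mul_add]
          congr 1
          · congr 1
            apply Finset.sum_congr rfl
            intro k _
            rw [show 2*k + n = 2*(k+j)+1 by omega, hw_even, hw_odd]
            ring
          · congr 1
            apply Finset.sum_congr rfl
            intro k _
            rw [show 2*k+1+n = 2*(k+(j+1)) by omega, hw_odd, hw_even]
            ring
        rw [show η n = 0 from hηn n (le_abs.mpr (by omega))]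
        have := hrE.add hrO
        rw [add_zero] at this
        exact Tendsto.congr (fun N => (key N).symm) this
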